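/- For every integer n ≥ 1, the number of rooted binary planar trees with n unlabeled leaves, which equals (1/n)·binom(2n−2, n−1), satisfies 4^{n−1} / (n · sqrt(π(n − 2/3))) ≤ (1/n)·binom(2n−2, n−1) ≤ 4^{n−1} / (n · sqrt(π(n − 3/4))). -/

import Mathlib

open Filter Real Topology

noncomputable def fseq (m : ℕ) : ℝ := (Nat.centralBinom m : ℝ) / 4 ^ m

lemma fseq_pos (m : ℕ) : 0 < fseq m := by
  unfold fseq
  have := Nat.centralBinom_pos m
  positivity

lemma fseq_succ (m : ℕ) : fseq (m + 1) = fseq m * ((2 * m + 1) / (2 * m + 2)) := by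
  have h := Nat.succ_mul_centralBinom_succ m
  have h' : ((m : ℝ) + 1) * (Nat.centralBinom (m + 1) : ℝ)
      = 2 * (2 * m + 1) * (Nat.centralBinom m : ℝ) := by exact_mod_cast h
  unfold fseq
  rw [pow_succ]
  have hm : ((m : ℝ) + 1) ≠ 0 := by positivity
  have h4 : ((4:ℝ)^m) ≠ 0 := by positivity
  rw [div_mul_div_comm, div_eq_div_iff (by positivity) (by positivity)]
  linear_combination (4:ℝ)^m * 2 * h'

lemma fseq_key (m : ℕ) :
    fseq m ^ 2 * (2 * m + 1) = (Real.Wallis.W m)⁻¹ := by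
  have h2 : (2 * m).choose m * Nat.factorial m * Nat.factorial m = Nat.factorial (2 * m) := by
    have := Nat.choose_mul_factorial_mul_factorial (show m ≤ 2 * m by omega)
    simpa [two_mul, Nat.add_sub_cancel] using this
  have h1 : (Nat.centralBinom m : ℝ) * (Nat.factorial m : ℝ) ^ 2
      = (Nat.factorial (2 * m) : ℝ) := by
    rw [Nat.centralBinom_eq_two_mul_choose]
    push_cast [← h2]
    ring
  have h3 : (2 : ℝ) ^ (4 * m) = ((4 : ℝ) ^ m) ^ 2 := by
    rw [show 4 * m = 2 * m * 2 by ring, pow_mul, pow_mul]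
    norm_num
  rw [Real.Wallis.W_eq_factorial_ratio, inv_div]
  unfold fseq
  have hf : (Nat.factorial m : ℝ) ≠ 0 := by positivity
  have h4 : ((4:ℝ)^m) ≠ 0 := by positivity
  rw [h3, div_pow, div_mul_eq_mul_div, div_eq_div_iff (by positivity) (by positivity)]
  push_cast
  linear_combination (2 * (m:ℝ) + 1) * ((4:ℝ)^m)^2 * ((Nat.centralBinom m : ℝ) * (Nat.factorial m : ℝ)^2
    + (Nat.factorial (2*m) : ℝ)) * h1

lemma fseq_tendsto (c : ℝ) :
    Tendsto (fun m : ℕ => fseq m ^ 2 * Real.pi * ((m : ℝ) + c)) atTop (nhds 1) := by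
  have hW : Tendsto (fun m : ℕ => (Real.Wallis.W m)⁻¹) atTop (nhds (π / 2)⁻¹) :=
    (Real.Wallis.tendsto_W_nhds_pi_div_two).inv₀ (by positivity)
  have h2 : Tendsto (fun m : ℕ => (2 * (m:ℝ) + 1)) atTop atTop := by
    apply tendsto_atTop_add_const_right
    exact Tendsto.const_mul_atTop (by norm_num) tendsto_natCast_atTop_atTop
  have hr : Tendsto (fun m : ℕ => π * ((m:ℝ) + c) / (2 * m + 1)) atTop (nhds (π / 2)) := by
    have heq : ∀ m : ℕ, π * ((m:ℝ) + c) / (2 * m + 1)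
        = π / 2 + (π * c - π / 2) / (2 * m + 1) := by
      intro m
      have : (2 * (m:ℝ) + 1) ≠ 0 := by positivity
      field_simp
      ring
    simp_rw [heq]
    have h0 : Tendsto (fun m : ℕ => (π * c - π / 2) / (2 * (m:ℝ) + 1)) atTop (nhds 0) :=
      Tendsto.div_atTop tendsto_const_nhds h2
    simpa using (tendsto_const_nhds (x := π / 2)).add h0
  have hmul := hW.mul hr
  have heq2 : ∀ m : ℕ, (Real.Wallis.W m)⁻¹ * (π * ((m:ℝ) + c) / (2 * m + 1))
      = fseq m ^ 2 * Real.pi * ((m : ℝ) + c) := by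
    intro m
    rw [← fseq_key m]
    have : (2 * (m:ℝ) + 1) ≠ 0 := by positivity
    field_simp
  simp_rw [heq2] at hmul
  have hv : ((π/2)⁻¹ * (π/2) : ℝ) = 1 := by
    field_simp
  rwa [hv] at hmul

lemma fseq_mono : Monotone (fun m : ℕ => fseq m ^ 2 * Real.pi * ((m : ℝ) + 1/4)) := by
  apply monotone_nat_of_le_succ
  intro m
  have hstep : fseq (m+1) ^ 2 = fseq m ^ 2 * ((2 * m + 1)^2 / (2 * m + 2)^2) := by
    rw [fseq_succ, mul_pow, div_pow]
  have hf := fseq_pos m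
  have hpi := Real.pi_pos
  have hd : (0:ℝ) < (2 * (m:ℝ) + 2)^2 := by positivity
  have h1 : fseq m ^ 2 * ((2 * (m:ℝ) + 1) ^ 2 / (2 * (m:ℝ) + 2) ^ 2) * π * ((m:ℝ) + 1 + 1/4)
      = fseq m ^ 2 * π * (((m:ℝ) + 1 + 1/4) * (2 * (m:ℝ) + 1) ^ 2) / (2 * (m:ℝ) + 2) ^ 2 := by
    ring
  rw [hstep]
  push_cast
  rw [h1, le_div_iff₀ hd]
  nlinarith [mul_pos (pow_pos hf 2) hpi]

lemma fseq_anti : Antitone (fun m : ℕ => fseq m ^ 2 * Real.pi * ((m : ℝ) + 1/3)) := by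
  apply antitone_nat_of_succ_le
  intro m
  have hstep : fseq (m+1) ^ 2 = fseq m ^ 2 * ((2 * m + 1)^2 / (2 * m + 2)^2) := by
    rw [fseq_succ, mul_pow, div_pow]
  have hf := fseq_pos m
  have hpi := Real.pi_pos
  have hd : (0:ℝ) < (2 * (m:ℝ) + 2)^2 := by positivity
  have h1 : fseq m ^ 2 * ((2 * (m:ℝ) + 1) ^ 2 / (2 * (m:ℝ) + 2) ^ 2) * π * ((m:ℝ) + 1 + 1/3)
      = fseq m ^ 2 * π * (((m:ℝ) + 1 + 1/3) * (2 * (m:ℝ) + 1) ^ 2) / (2 * (m:ℝ) + 2) ^ 2 := by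
    ring
  rw [hstep]
  push_cast
  rw [h1, div_le_iff₀ hd]
  nlinarith [mul_pos (pow_pos hf 2) hpi,
    mul_nonneg (mul_pos (pow_pos hf 2) hpi).le (Nat.cast_nonneg (α := ℝ) m)]

lemma fseq_le (m : ℕ) : fseq m ^ 2 * Real.pi * ((m : ℝ) + 1/4) ≤ 1 :=
  fseq_mono.ge_of_tendsto (fseq_tendsto (1/4)) m

lemma fseq_ge (m : ℕ) : 1 ≤ fseq m ^ 2 * Real.pi * ((m : ℝ) + 1/3) :=
  fseq_anti.le_of_tendsto (fseq_tendsto (1/3)) m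

theorem stmt12 (n : ℕ) (hn : 1 ≤ n) :
    (4 : ℝ) ^ (n - 1) / ((n : ℝ) * Real.sqrt (Real.pi * ((n : ℝ) - 2/3))) ≤
      (1 / (n : ℝ)) * (Nat.choose (2 * n - 2) (n - 1) : ℝ) ∧
    (1 / (n : ℝ)) * (Nat.choose (2 * n - 2) (n - 1) : ℝ) ≤
      (4 : ℝ) ^ (n - 1) / ((n : ℝ) * Real.sqrt (Real.pi * ((n : ℝ) - 3/4))) := by
  obtain ⟨m, rfl⟩ : ∃ m, n = m + 1 := ⟨n - 1, by omega⟩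
  have hch : (Nat.choose (2 * (m+1) - 2) ((m+1) - 1) : ℝ) = (Nat.centralBinom m : ℝ) := by
    rw [Nat.centralBinom_eq_two_mul_choose]
    congr 2 <;> omega
  have hcast : ((m + 1 : ℕ) : ℝ) = (m : ℝ) + 1 := by push_cast; ring
  rw [hch, hcast]
  have hf := fseq_pos m
  have hpi := Real.pi_pos
  have hm14 : (0:ℝ) < π * ((m:ℝ) + 1/4) := by positivity
  have hm13 : (0:ℝ) < π * ((m:ℝ) + 1/3) := by positivity
  have hs4 : (0:ℝ) < Real.sqrt (π * ((m:ℝ) + 1/4)) := Real.sqrt_pos.mpr hm14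
  have hs3 : (0:ℝ) < Real.sqrt (π * ((m:ℝ) + 1/3)) := Real.sqrt_pos.mpr hm13
  have hsq4 : Real.sqrt (π * ((m:ℝ) + 1/4)) ^ 2 = π * ((m:ℝ) + 1/4) :=
    Real.sq_sqrt hm14.le
  have hsq3 : Real.sqrt (π * ((m:ℝ) + 1/3)) ^ 2 = π * ((m:ℝ) + 1/3) :=
    Real.sq_sqrt hm13.le
  have hpow : ((m+1) - 1 : ℕ) = m := by omega
  rw [hpow]
  have hup : fseq m * Real.sqrt (π * ((m:ℝ) + 1/4)) ≤ 1 := by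
    have h := fseq_le m
    nlinarith [mul_pos hf hs4, hsq4]
  have hlo : 1 ≤ fseq m * Real.sqrt (π * ((m:ℝ) + 1/3)) := by
    have h := fseq_ge m
    nlinarith [mul_pos hf hs3, hsq3]
  have hCup : (Nat.centralBinom m : ℝ) ≤ 4 ^ m / Real.sqrt (π * ((m:ℝ) + 1/4)) := by
    rw [le_div_iff₀ hs4]
    have h := mul_le_mul_of_nonneg_right hup (show (0:ℝ) ≤ 4^m by positivity)
    unfold fseq at h
    rw [one_mul] at h
    calc (Nat.centralBinom m : ℝ) * Real.sqrt (π * ((m:ℝ) + 1/4))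
        = (Nat.centralBinom m : ℝ) / 4^m * Real.sqrt (π * ((m:ℝ) + 1/4)) * 4^m := by
          rw [div_mul_eq_mul_div, div_mul_cancel₀ _ (pow_ne_zero m (by norm_num : (4:ℝ) ≠ 0))]
      _ ≤ 4 ^ m := h
  have hClo : 4 ^ m / Real.sqrt (π * ((m:ℝ) + 1/3)) ≤ (Nat.centralBinom m : ℝ) := by
    rw [div_le_iff₀ hs3]
    have h := mul_le_mul_of_nonneg_right hlo (show (0:ℝ) ≤ 4^m by positivity)
    unfold fseq at h
    rw [one_mul] at h
    calc (4:ℝ) ^ m ≤ (Nat.centralBinom m : ℝ) / 4^m * Real.sqrt (π * ((m:ℝ) + 1/3)) * 4^m := h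
      _ = (Nat.centralBinom m : ℝ) * Real.sqrt (π * ((m:ℝ) + 1/3)) := by
          rw [div_mul_eq_mul_div, div_mul_cancel₀ _ (pow_ne_zero m (by norm_num : (4:ℝ) ≠ 0))]
  have he3 : ((m:ℝ) + 1 - 2/3) = (m:ℝ) + 1/3 := by ring
  have he4 : ((m:ℝ) + 1 - 3/4) = (m:ℝ) + 1/4 := by ring
  rw [he3, he4]
  constructor
  · rw [div_mul_eq_div_div_swap, one_div_mul_eq_div]
    gcongr
  · rw [div_mul_eq_div_div_swap, one_div_mul_eq_div]
    gcongr
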